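/- The recursively defined map SP is a bijection between the set of valid digraphs consisting only of backward arrows on an (n+1)-element linearly ordered node set and the set of Schröder words of length 2n; moreover, a digraph with exactly k backward arrows maps to a word with exactly k letters U and k letters D. -/
import Mathlib


/-- The letters of Delannoy/Schröder words: `U` (up, length 1), `D` (down,
length 1), `H` (horizontal, length 2). -/
inductive DLetter : Type
  | U : DLetter
  | D : DLetter
  | H : DLetter
  deriving DecidableEq

/-- The length of the lattice path encoded by a word (`U`, `D` count 1, `H`
counts 2). -/
def wordLength (w : List DLetter) : ℕ :=
  w.count DLetter.U + w.count DLetter.D + 2 * w.count DLetter.H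

/-- A Schröder word: in every prefix the number of `D`'s is at most the number of
`U`'s (the path never goes below the axis), and altogether `U`'s and `D`'s are
equinumerous (the path is balanced). -/
def IsSchroederWord (w : List DLetter) : Prop :=
  w.count DLetter.U = w.count DLetter.D ∧
    ∀ p : List DLetter, p <+: w → p.count DLetter.D ≤ p.count DLetter.U

/-- The restriction of a digraph to the induced subgraph on a set `W` of nodes. -/
def restr (A : Finset (ℕ × ℕ)) (W : Finset ℕ) : Finset (ℕ × ℕ) :=
  A.filter (fun p => p.1 ∈ W ∧ p.2 ∈ W)

/-- The recursively defined map `SP` from digraphs of backward arrows on a finite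
node set `V ⊆ ℕ` to Schröder words: for a single node it is the empty word; if the
least node `v` is isolated, `SP(A) = H · SP(A restricted to V−{v})`; otherwise,
`w` being the least node with an arrow into `v`,
`SP(A) = U · SP(A on V ∩ (v,w]) · D · SP(A on V − (v,w])`. -/
def SP (V : Finset ℕ) (A : Finset (ℕ × ℕ)) : List DLetter :=
  if h : V.Nonempty then
    if V.card = 1 then []
    else
      let v := V.min' h
      let T := V.filter (fun x => v < x ∧ (x, v) ∈ A)
      if hT : T.Nonempty then
        let w := T.min' hT
        let V₁ := V.filter (fun x => v < x ∧ x ≤ w)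
        let V₂ := V.filter (fun x => ¬(v < x ∧ x ≤ w))
        DLetter.U :: (SP V₁ (restr A V₁) ++ DLetter.D :: SP V₂ (restr A V₂))
      else DLetter.H :: SP (V.erase v) (restr A (V.erase v))
  else []
termination_by V.card
decreasing_by
  · refine Finset.card_lt_card ⟨Finset.filter_subset _ _, fun hsub => ?_⟩
    have hv := V.min'_mem h
    have := hsub hv
    simp at this
  · have hw : T.min' hT ∈ T := T.min'_mem hT
    simp only [T, Finset.mem_filter] at hw
    refine Finset.card_lt_card ⟨Finset.filter_subset _ _, fun hsub => ?_⟩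
    have := hsub hw.1
    simp only [Finset.mem_filter] at this
    exact this.2 ⟨hw.2.1, le_refl _⟩
  · exact Finset.card_erase_lt_of_mem (V.min'_mem h)

/-- A valid digraph of backward arrows on the node set `V`: each arrow `(x,y)` has
`x, y ∈ V` with `x > y`, no two arrows cross, and no node is both the head of one
arrow and the tail of another. -/
def IsValidBackward (V : Finset ℕ) (A : Finset (ℕ × ℕ)) : Prop :=
  (∀ p ∈ A, p.1 ∈ V ∧ p.2 ∈ V ∧ p.2 < p.1) ∧
    (∀ p ∈ A, ∀ q ∈ A,
      ¬((p.2 < q.2 ∧ q.2 < p.1 ∧ p.1 < q.1) ∨ (q.2 < p.2 ∧ p.2 < q.1 ∧ q.1 < p.1))) ∧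
    (∀ p ∈ A, ∀ q ∈ A, p.2 ≠ q.1)
section
lemma SP_card_one (V : Finset ℕ) (h : V.card = 1) (A : Finset (ℕ × ℕ)) : SP V A = [] := by
  rw [SP]
  simp [h, Finset.card_pos.mp (h ▸ Nat.one_pos)]

lemma SP_isolated (V : Finset ℕ) (h : V.Nonempty) (h1 : V.card ≠ 1) (A : Finset (ℕ × ℕ))
    (v : ℕ) (hv : V.min' h = v)
    (hT : ¬ (V.filter (fun x => v < x ∧ (x, v) ∈ A)).Nonempty) :
    SP V A = DLetter.H :: SP (V.erase v) (restr A (V.erase v)) := by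
  subst hv
  rw [SP]
  simp only [h, dite_true, h1, if_false, hT, dite_false]

lemma SP_arrow (V : Finset ℕ) (h : V.Nonempty) (h1 : V.card ≠ 1) (A : Finset (ℕ × ℕ))
    (v w : ℕ) (hv : V.min' h = v)
    (hT : (V.filter (fun x => v < x ∧ (x, v) ∈ A)).Nonempty)
    (hw : (V.filter (fun x => v < x ∧ (x, v) ∈ A)).min' hT = w) :
    SP V A =
      DLetter.U ::
        (SP (V.filter (fun x => v < x ∧ x ≤ w))
            (restr A (V.filter (fun x => v < x ∧ x ≤ w))) ++
          DLetter.D ::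
            SP (V.filter (fun x => ¬(v < x ∧ x ≤ w)))
              (restr A (V.filter (fun x => ¬(v < x ∧ x ≤ w))))) := by
  subst hv
  subst hw
  rw [SP]
  simp only [h, dite_true, h1, if_false, hT]
end
section
open DLetter List

lemma prefix_cons_cases {α : Type*} {p : List α} {a : α} {l : List α} (h : p <+: a :: l) :
    p = [] ∨ ∃ q, q <+: l ∧ p = a :: q := by
  match p with
  | [] => exact Or.inl rfl
  | b :: q =>
    rw [List.cons_prefix_cons] at h
    exact Or.inr ⟨q, h.2, by rw [h.1]⟩

lemma prefix_append_cases {α : Type*} {p s l : List α} (h : p <+: s ++ l) :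
    p <+: s ∨ ∃ q, q <+: l ∧ p = s ++ q := by
  rcases le_or_gt p.length s.length with hl | hl
  · exact Or.inl (List.prefix_of_prefix_length_le h (List.prefix_append s l) hl)
  · have hs : s <+: p := List.prefix_of_prefix_length_le (List.prefix_append s l) h hl.le
    obtain ⟨q, rfl⟩ := hs
    obtain ⟨r, hr⟩ := h
    rw [List.append_assoc] at hr
    exact Or.inr ⟨q, ⟨r, (List.append_cancel_left hr)⟩, rfl⟩

lemma isSchroeder_nil : IsSchroederWord [] := by
  constructor
  · rfl
  · intro p hp; simp [List.prefix_nil.mp hp]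

lemma isSchroeder_cons_H {r : List DLetter} :
    IsSchroederWord (DLetter.H :: r) ↔ IsSchroederWord r := by
  constructor
  · rintro ⟨h1, h2⟩
    refine ⟨by simpa using h1, fun p hp => ?_⟩
    have := h2 (DLetter.H :: p) (by simpa using hp)
    simpa using this
  · rintro ⟨h1, h2⟩
    refine ⟨by simpa using h1, fun p hp => ?_⟩
    rcases prefix_cons_cases hp with rfl | ⟨q, hq, rfl⟩
    · simp
    · simpa using h2 q hq

lemma isSchroeder_UD {s t : List DLetter} (hs : IsSchroederWord s) (ht : IsSchroederWord t) :
    IsSchroederWord (DLetter.U :: (s ++ DLetter.D :: t)) := by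
  obtain ⟨hs1, hs2⟩ := hs
  obtain ⟨ht1, ht2⟩ := ht
  constructor
  · simp [List.count_append, List.count_cons]; omega
  · intro p hp
    rcases prefix_cons_cases hp with rfl | ⟨q, hq, rfl⟩
    · simp
    · rcases prefix_append_cases hq with hq1 | ⟨q2, hq2, rfl⟩
      · have := hs2 q hq1
        simp [List.count_cons]; omega
      · rcases prefix_cons_cases hq2 with rfl | ⟨q3, hq3, rfl⟩
        · simp [List.count_append, List.count_cons]; omega
        · have := ht2 q3 hq3
          simp [List.count_append, List.count_cons]; omega

lemma wordLength_cons_H (r : List DLetter) : wordLength (DLetter.H :: r) = 2 + wordLength r := by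
  simp [wordLength, List.count_cons]; ring

lemma wordLength_UD (s t : List DLetter) :
    wordLength (DLetter.U :: (s ++ DLetter.D :: t)) = 2 + wordLength s + wordLength t := by
  simp [wordLength, List.count_append, List.count_cons]; ring

end
section
open DLetter List

/-- Existence of first-return decomposition. -/
lemma decompA : ∀ N (r : List DLetter), r.length ≤ N →
    r.count DLetter.U + 1 ≤ r.count DLetter.D →
    ∃ s t, r = s ++ DLetter.D :: t ∧ s.count DLetter.U = s.count DLetter.D ∧
      ∀ p, p <+: s → p.count DLetter.D ≤ p.count DLetter.U := by
  intro N
  induction N with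
  | zero =>
    intro r hr hc
    rw [Nat.le_zero, List.length_eq_zero_iff] at hr; subst hr; simp at hc
  | succ N ih =>
    intro r hr hc
    match r with
    | [] => simp at hc
    | DLetter.D :: r' =>
      exact ⟨[], r', rfl, rfl, fun p hp => by simp [List.prefix_nil.mp hp]⟩
    | DLetter.H :: r' =>
      obtain ⟨s, t, rfl, hs1, hs2⟩ := ih r' (by simpa using hr) (by simpa using hc)
      refine ⟨DLetter.H :: s, t, rfl, by simpa using hs1, fun p hp => ?_⟩
      rcases prefix_cons_cases hp with rfl | ⟨q, hq, rfl⟩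
      · simp
      · simpa using hs2 q hq
    | DLetter.U :: r' =>
      have hr' : r'.length ≤ N := by simpa using hr
      have hc' : r'.count DLetter.U + 2 ≤ r'.count DLetter.D := by
        simp [List.count_cons] at hc ⊢; omega
      obtain ⟨s, t, rfl, hs1, hs2⟩ := ih r' hr' (by omega)
      have hct : t.count DLetter.U + 1 ≤ t.count DLetter.D := by
        simp [List.count_append, List.count_cons] at hc'; omega
      have hlt : t.length ≤ N := by
        simp [List.length_append] at hr'; omega
      obtain ⟨s2, t2, rfl, hs21, hs22⟩ := ih t hlt hct
      refine ⟨DLetter.U :: s ++ DLetter.D :: s2, t2, by simp, ?_, ?_⟩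
      · simp [List.count_append, List.count_cons]; omega
      · intro p hp
        rcases prefix_cons_cases hp with rfl | ⟨q, hq, rfl⟩
        · simp
        · rcases prefix_append_cases hq with hq1 | ⟨q2, hq2, rfl⟩
          · have := hs2 q hq1
            simp [List.count_cons]; omega
          · rcases prefix_cons_cases hq2 with rfl | ⟨q3, hq3, rfl⟩
            · simp [List.count_append, List.count_cons]; omega
            · have := hs22 q3 hq3
              simp [List.count_append, List.count_cons]; omega

/-- Decomposing a Schröder word starting with `U`. -/
lemma schroeder_U_decomp {r : List DLetter} (h : IsSchroederWord (DLetter.U :: r)) :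
    ∃ s t, r = s ++ DLetter.D :: t ∧ IsSchroederWord s ∧ IsSchroederWord t := by
  obtain ⟨h1, h2⟩ := h
  have hc : r.count DLetter.U + 1 ≤ r.count DLetter.D := by
    simp [List.count_cons] at h1; omega
  obtain ⟨s, t, rfl, hs1, hs2⟩ := decompA r.length r le_rfl hc
  refine ⟨s, t, rfl, ⟨hs1.symm ▸ rfl, hs2⟩, ?_, ?_⟩
  · simp [List.count_append, List.count_cons] at h1 ⊢; omega
  · intro p hp
    obtain ⟨rr, rfl⟩ := hp
    have := h2 (DLetter.U :: (s ++ DLetter.D :: p)) ⟨rr, by simp⟩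
    simp [List.count_append, List.count_cons] at this
    omega

/-- Uniqueness half: if `s ++ D :: t = s' ++ D :: t'` with `s, s'` balanced
nonneg, and `s.length ≤ s'.length`, then `s = s'`. -/
lemma split_unique_aux {s s' t t' : List DLetter}
    (hs1 : s.count DLetter.U = s.count DLetter.D)
    (hs2' : ∀ p, p <+: s' → p.count DLetter.D ≤ p.count DLetter.U)
    (hlen : s.length ≤ s'.length)
    (heq : s ++ DLetter.D :: t = s' ++ DLetter.D :: t') : s = s' := by
  have hpre : s <+: s' :=
    List.prefix_of_prefix_length_le (heq ▸ List.prefix_append s _) (List.prefix_append s' _) hlen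
  obtain ⟨r, rfl⟩ := hpre
  match r with
  | [] => simp
  | a :: r2 =>
    rw [List.append_assoc] at heq
    have : DLetter.D :: t = (a :: r2) ++ DLetter.D :: t' := List.append_cancel_left heq
    have ha : a = DLetter.D := by
      have := congrArg (fun l => l.head?) this
      simpa using this.symm
    subst ha
    have := hs2' (s ++ [DLetter.D]) ⟨r2, by simp⟩
    simp [List.count_append, List.count_cons] at this
    omega

lemma split_unique {s s' t t' : List DLetter}
    (hs : IsSchroederWord s) (hs' : IsSchroederWord s')
    (heq : s ++ DLetter.D :: t = s' ++ DLetter.D :: t') : s = s' ∧ t = t' := by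
  have hss : s = s' := by
    rcases le_total s.length s'.length with hl | hl
    · exact split_unique_aux hs.1 hs'.2 hl heq
    · exact (split_unique_aux hs'.1 hs.2 hl heq.symm).symm
  subst hss
  exact ⟨rfl, by simpa using List.append_cancel_left heq⟩

end
section

lemma exists_filter_le_card : ∀ (m : ℕ) (S : Finset ℕ) (k : ℕ), S.card = k + 1 + m →
    ∃ w ∈ S, (S.filter (fun x => x ≤ w)).card = k + 1 := by
  intro m
  induction m with
  | zero =>
    intro S k hS
    have hne : S.Nonempty := Finset.card_pos.mp (by omega)
    refine ⟨S.max' hne, S.max'_mem hne, ?_⟩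
    rw [Finset.filter_true_of_mem (fun x hx => S.le_max' x hx)]
    omega
  | succ m ih =>
    intro S k hS
    have hne : S.Nonempty := Finset.card_pos.mp (by omega)
    have hmax := S.max'_mem hne
    have hcard : (S.erase (S.max' hne)).card = k + 1 + m := by
      rw [Finset.card_erase_of_mem hmax]; omega
    obtain ⟨w, hw, hwc⟩ := ih (S.erase (S.max' hne)) k hcard
    have hwlt : w < S.max' hne := by
      rcases Finset.mem_erase.mp hw with ⟨hne2, hmem⟩
      exact lt_of_le_of_ne (S.le_max' w hmem) hne2
    refine ⟨w, (Finset.mem_erase.mp hw).2, ?_⟩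
    rw [← hwc]
    congr 1
    ext x
    simp only [Finset.mem_filter, Finset.mem_erase]
    constructor
    · rintro ⟨hx, hxw⟩
      exact ⟨⟨by omega, hx⟩, hxw⟩
    · rintro ⟨⟨_, hx⟩, hxw⟩
      exact ⟨hx, hxw⟩

lemma filter_le_inj_aux {S : Finset ℕ} {w w' : ℕ} (hw' : w' ∈ S) (hlt : w < w') :
    (S.filter (fun x => x ≤ w)).card < (S.filter (fun x => x ≤ w')).card := by
  apply Finset.card_lt_card
  constructor
  · intro x hx
    rcases Finset.mem_filter.mp hx with ⟨h1, h2⟩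
    exact Finset.mem_filter.mpr ⟨h1, by omega⟩
  · intro hsub
    have := hsub (Finset.mem_filter.mpr ⟨hw', le_refl w'⟩)
    rcases Finset.mem_filter.mp this with ⟨_, h2⟩
    omega

lemma filter_le_inj {S : Finset ℕ} {w w' : ℕ} (hw : w ∈ S) (hw' : w' ∈ S)
    (h : (S.filter (fun x => x ≤ w)).card = (S.filter (fun x => x ≤ w')).card) : w = w' := by
  rcases lt_trichotomy w w' with hlt | heq | hlt
  · exact absurd h (Nat.ne_of_lt (filter_le_inj_aux hw' hlt))
  · exact heq
  · exact absurd h.symm (Nat.ne_of_lt (filter_le_inj_aux hw hlt))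

lemma filterV1_eq (V : Finset ℕ) (h : V.Nonempty) (w : ℕ) :
    V.filter (fun x => V.min' h < x ∧ x ≤ w) = (V.erase (V.min' h)).filter (fun x => x ≤ w) := by
  ext x
  simp only [Finset.mem_filter, Finset.mem_erase]
  constructor
  · rintro ⟨hx, h1, h2⟩
    exact ⟨⟨by omega, hx⟩, h2⟩
  · rintro ⟨⟨h1, hx⟩, h2⟩
    have := V.min'_le x hx
    exact ⟨hx, by omega, h2⟩

end
section

lemma restr_subset (A : Finset (ℕ × ℕ)) (W : Finset ℕ) : restr A W ⊆ A :=
  Finset.filter_subset _ _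

lemma valid_restr {V W : Finset ℕ} {A : Finset (ℕ × ℕ)} (hA : IsValidBackward V A) :
    IsValidBackward W (restr A W) := by
  obtain ⟨h1, h2, h3⟩ := hA
  refine ⟨?_, ?_, ?_⟩
  · intro p hp
    rcases Finset.mem_filter.mp hp with ⟨hpA, hp1, hp2⟩
    exact ⟨hp1, hp2, (h1 p hpA).2.2⟩
  · intro p hp q hq
    exact h2 p (restr_subset A W hp) q (restr_subset A W hq)
  · intro p hp q hq
    exact h3 p (restr_subset A W hp) q (restr_subset A W hq)

lemma valid_mono {V W : Finset ℕ} {A : Finset (ℕ × ℕ)} (hWV : W ⊆ V)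
    (hA : IsValidBackward W A) : IsValidBackward V A := by
  obtain ⟨h1, h2, h3⟩ := hA
  exact ⟨fun p hp => ⟨hWV (h1 p hp).1, hWV (h1 p hp).2.1, (h1 p hp).2.2⟩, h2, h3⟩

lemma valid_empty (V : Finset ℕ) : IsValidBackward V ∅ := by
  refine ⟨?_, ?_, ?_⟩ <;> intro p hp <;> simp at hp

lemma valid_singleton {V : Finset ℕ} {A : Finset (ℕ × ℕ)} (hA : IsValidBackward V A)
    (h : V.card = 1) : A = ∅ := by
  obtain ⟨a, rfl⟩ := Finset.card_eq_one.mp h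
  ext p
  simp only [Finset.notMem_empty, iff_false]
  intro hp
  obtain ⟨h1, h2, h3⟩ := hA.1 p hp
  simp only [Finset.mem_singleton] at h1 h2
  omega

/-- In the `H` case (no arrow into the minimum), `A` does not touch `v`. -/
lemma structure_H {V : Finset ℕ} {A : Finset (ℕ × ℕ)} {v : ℕ}
    (hA : IsValidBackward V A) (hvmin : ∀ x ∈ V, v ≤ x)
    (hT : ∀ x, v < x → (x, v) ∉ A) :
    restr A (V.erase v) = A := by
  ext p
  simp only [restr, Finset.mem_filter, Finset.mem_erase]
  constructor
  · tauto
  · intro hp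
    obtain ⟨h1, h2, h3⟩ := hA.1 p hp
    have hv2 : v ≤ p.2 := hvmin _ h2
    have hp2v : p.2 ≠ v := by
      intro hc
      exact hT p.1 (by omega) (by rw [← hc, Prod.mk.eta]; exact hp)
    exact ⟨hp, ⟨by omega, h1⟩, ⟨hp2v, h2⟩⟩

/-- Structure of a valid digraph in the `U` case. -/
lemma structure_U {V : Finset ℕ} {A : Finset (ℕ × ℕ)} {v w : ℕ}
    (hA : IsValidBackward V A) (hvmin : ∀ x ∈ V, v ≤ x)
    (hwA : (w, v) ∈ A) (hvw : v < w)
    (hwmin : ∀ x, (x, v) ∈ A → w ≤ x) :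
    A = insert (w, v) (restr A (V.filter (fun x => v < x ∧ x ≤ w)) ∪
        restr A (V.filter (fun x => ¬(v < x ∧ x ≤ w)))) ∧
      (w, v) ∉ restr A (V.filter (fun x => v < x ∧ x ≤ w)) ∪
        restr A (V.filter (fun x => ¬(v < x ∧ x ≤ w))) ∧
      Disjoint (restr A (V.filter (fun x => v < x ∧ x ≤ w)))
        (restr A (V.filter (fun x => ¬(v < x ∧ x ≤ w)))) := by
  obtain ⟨h1, h2, h3⟩ := hA
  refine ⟨?_, ?_, ?_⟩
  · ext p
    simp only [Finset.mem_insert, Finset.mem_union, restr, Finset.mem_filter]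
    constructor
    · intro hp
      obtain ⟨hx, hy, hyx⟩ := h1 p hp
      have hvy : v ≤ p.2 := hvmin _ hy
      have hvx : v ≤ p.1 := hvmin _ hx
      rcases eq_or_lt_of_le hvy with hyv | hyv
      · -- p.2 = v
        have hple : w ≤ p.1 := hwmin p.1 (by rw [hyv, Prod.mk.eta]; exact hp)
        rcases eq_or_lt_of_le hple with hpw | hpw
        · left; rw [← Prod.mk.eta (p := p), ← hpw, hyv]
        · right; right
          exact ⟨hp, ⟨hx, by omega⟩, ⟨hy, by omega⟩⟩
      · -- v < p.2
        rcases lt_trichotomy p.2 w with hyw | hyw | hyw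
        · -- v < p.2 < w: claim p.1 ≤ w
          have hxw : p.1 ≤ w := by
            by_contra hcon
            exact h2 (w, v) hwA p hp (Or.inl ⟨hyv, hyw, by omega⟩)
          right; left
          exact ⟨hp, ⟨hx, by omega⟩, ⟨hy, by omega⟩⟩
        · -- p.2 = w: w head and tail
          exact absurd (hyw ▸ rfl : p.2 = (w, v).1) (h3 p hp (w, v) hwA)
        · -- p.2 > w
          right; right
          exact ⟨hp, ⟨hx, by omega⟩, ⟨hy, by omega⟩⟩
    · rintro (rfl | ⟨hp, _⟩ | ⟨hp, _⟩) <;> first | exact hwA | exact hp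
  · simp only [Finset.mem_union, restr, Finset.mem_filter]
    rintro (⟨_, _, _, hv2⟩ | ⟨_, ⟨_, hw1⟩, _⟩)
    · omega
    · exact hw1 ⟨hvw, le_refl w⟩
  · rw [Finset.disjoint_left]
    rintro p hp1 hp2
    simp only [restr, Finset.mem_filter] at hp1 hp2
    exact hp2.2.1.2 hp1.2.1.2

end
section

lemma count_U_UD (s t : List DLetter) :
    (DLetter.U :: (s ++ DLetter.D :: t)).count DLetter.U
      = s.count DLetter.U + t.count DLetter.U + 1 := by
  simp [List.count_cons, List.count_append]

lemma count_D_UD (s t : List DLetter) :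
    (DLetter.U :: (s ++ DLetter.D :: t)).count DLetter.D
      = s.count DLetter.D + t.count DLetter.D + 1 := by
  simp [List.count_cons, List.count_append]; omega

lemma count_U_H (r : List DLetter) :
    (DLetter.H :: r).count DLetter.U = r.count DLetter.U := by
  simp [List.count_cons]

lemma count_D_H (r : List DLetter) :
    (DLetter.H :: r).count DLetter.D = r.count DLetter.D := by
  simp [List.count_cons]

lemma SP_spec : ∀ (N : ℕ) (V : Finset ℕ) (A : Finset (ℕ × ℕ)), V.card ≤ N → V.Nonempty →
    IsValidBackward V A →
    IsSchroederWord (SP V A) ∧ wordLength (SP V A) = 2 * (V.card - 1) ∧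
      (SP V A).count DLetter.U = A.card ∧ (SP V A).count DLetter.D = A.card := by
  intro N
  induction N with
  | zero =>
    intro V A hN hne hA
    exact absurd (Finset.card_pos.mpr hne) (by omega)
  | succ N ih =>
    intro V A hN hne hA
    by_cases h1 : V.card = 1
    · rw [SP_card_one V h1 A, valid_singleton hA h1]
      refine ⟨isSchroeder_nil, ?_, ?_, ?_⟩ <;> simp [wordLength, h1]
    · obtain ⟨v, hv⟩ : ∃ v, V.min' hne = v := ⟨_, rfl⟩
      have hvmem : v ∈ V := hv ▸ V.min'_mem hne
      have hvmin : ∀ x ∈ V, v ≤ x := fun x hx => hv ▸ V.min'_le x hx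
      have hcard2 : 2 ≤ V.card := by
        have := Finset.card_pos.mpr hne; omega
      by_cases hT : (V.filter (fun x => v < x ∧ (x, v) ∈ A)).Nonempty
      · -- U case
        obtain ⟨w, hw⟩ : ∃ w, (V.filter (fun x => v < x ∧ (x, v) ∈ A)).min' hT = w := ⟨_, rfl⟩
        have hwT : w ∈ V.filter (fun x => v < x ∧ (x, v) ∈ A) := hw ▸ Finset.min'_mem _ hT
        rw [Finset.mem_filter] at hwT
        obtain ⟨hwV, hvw, hwA⟩ := hwT
        have hwmin : ∀ x, (x, v) ∈ A → w ≤ x := by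
          intro x hx
          obtain ⟨hx1, _, hx2⟩ := hA.1 (x, v) hx
          exact hw ▸ Finset.min'_le _ x (Finset.mem_filter.mpr ⟨hx1, hx2, hx⟩)
        obtain ⟨hdecomp, hnotmem, hdisj⟩ := structure_U hA hvmin hwA hvw hwmin
        obtain ⟨V₁, hV₁⟩ : ∃ s, V.filter (fun x => v < x ∧ x ≤ w) = s := ⟨_, rfl⟩
        obtain ⟨V₂, hV₂⟩ : ∃ s, V.filter (fun x => ¬(v < x ∧ x ≤ w)) = s := ⟨_, rfl⟩
        rw [hV₁, hV₂] at hdecomp hnotmem hdisj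
        have hV₁ne : V₁.Nonempty := ⟨w, hV₁ ▸ Finset.mem_filter.mpr ⟨hwV, hvw, le_refl w⟩⟩
        have hV₂ne : V₂.Nonempty := ⟨v, hV₂ ▸ Finset.mem_filter.mpr ⟨hvmem, by omega⟩⟩
        have hsum : V₁.card + V₂.card = V.card := by
          rw [← hV₁, ← hV₂]
          exact Finset.card_filter_add_card_filter_not _
        have hc1 : 1 ≤ V₁.card := Finset.card_pos.mpr hV₁ne
        have hc2 : 1 ≤ V₂.card := Finset.card_pos.mpr hV₂ne
        have hA₁ := valid_restr (W := V₁) hA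
        have hA₂ := valid_restr (W := V₂) hA
        obtain ⟨hs1, hs2, hs3, hs4⟩ := ih V₁ (restr A V₁) (by omega) hV₁ne hA₁
        obtain ⟨ht1, ht2, ht3, ht4⟩ := ih V₂ (restr A V₂) (by omega) hV₂ne hA₂
        rw [SP_arrow V hne h1 A v w hv hT hw, hV₁, hV₂]
        have hAcard : A.card = (restr A V₁).card + (restr A V₂).card + 1 := by
          conv_lhs => rw [hdecomp]
          rw [Finset.card_insert_of_notMem hnotmem,
            Finset.card_union_of_disjoint hdisj]
        refine ⟨isSchroeder_UD hs1 ht1, ?_, ?_, ?_⟩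
        · rw [wordLength_UD, hs2, ht2]; omega
        · rw [count_U_UD, hs3, ht3, hAcard]
        · rw [count_D_UD, hs4, ht4, hAcard]
      · -- H case
        have hTall : ∀ x, v < x → (x, v) ∉ A := by
          intro x hx hc
          exact hT ⟨x, Finset.mem_filter.mpr ⟨(hA.1 (x, v) hc).1, hx, hc⟩⟩
        have hrestr := structure_H hA hvmin hTall
        have hecard : (V.erase v).card = V.card - 1 := Finset.card_erase_of_mem hvmem
        have hene : (V.erase v).Nonempty := Finset.card_pos.mp (by omega)
        have hAe : IsValidBackward (V.erase v) A := by
          rw [← hrestr]; exact valid_restr hA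
        obtain ⟨hs1, hs2, hs3, hs4⟩ := ih (V.erase v) (restr A (V.erase v)) (by omega) hene
          (by rw [hrestr]; exact hAe)
        rw [SP_isolated V hne h1 A v hv hT]
        refine ⟨isSchroeder_cons_H.mpr hs1, ?_, ?_, ?_⟩
        · rw [wordLength_cons_H, hs2]; omega
        · rw [count_U_H, hs3, hrestr]
        · rw [count_D_H, hs4, hrestr]

end
section

lemma SP_inj : ∀ (N : ℕ) (V : Finset ℕ) (A A' : Finset (ℕ × ℕ)), V.card ≤ N → V.Nonempty →
    IsValidBackward V A → IsValidBackward V A' → SP V A = SP V A' → A = A' := by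
  intro N
  induction N with
  | zero =>
    intro V A A' hN hne
    exact absurd (Finset.card_pos.mpr hne) (by omega)
  | succ N ih =>
    intro V A A' hN hne hA hA' heq
    by_cases h1 : V.card = 1
    · rw [valid_singleton hA h1, valid_singleton hA' h1]
    · obtain ⟨v, hv⟩ : ∃ v, V.min' hne = v := ⟨_, rfl⟩
      have hvmem : v ∈ V := hv ▸ V.min'_mem hne
      have hvmin : ∀ x ∈ V, v ≤ x := fun x hx => hv ▸ V.min'_le x hx
      have hcard2 : 2 ≤ V.card := by
        have := Finset.card_pos.mpr hne; omega
      by_cases hT : (V.filter (fun x => v < x ∧ (x, v) ∈ A)).Nonempty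
      · by_cases hT' : (V.filter (fun x => v < x ∧ (x, v) ∈ A')).Nonempty
        · -- both U
          obtain ⟨w, hw⟩ : ∃ w, (V.filter (fun x => v < x ∧ (x, v) ∈ A)).min' hT = w := ⟨_, rfl⟩
          obtain ⟨w', hw'⟩ : ∃ w, (V.filter (fun x => v < x ∧ (x, v) ∈ A')).min' hT' = w :=
            ⟨_, rfl⟩
          have hwT : w ∈ V.filter (fun x => v < x ∧ (x, v) ∈ A) := hw ▸ Finset.min'_mem _ hT
          have hwT' : w' ∈ V.filter (fun x => v < x ∧ (x, v) ∈ A') := hw' ▸ Finset.min'_mem _ hT'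
          rw [Finset.mem_filter] at hwT hwT'
          obtain ⟨hwV, hvw, hwA⟩ := hwT
          obtain ⟨hwV', hvw', hwA'⟩ := hwT'
          have hwmin : ∀ x, (x, v) ∈ A → w ≤ x := fun x hx =>
            hw ▸ Finset.min'_le _ x (Finset.mem_filter.mpr ⟨(hA.1 (x, v) hx).1, (hA.1 (x, v) hx).2.2, hx⟩)
          have hwmin' : ∀ x, (x, v) ∈ A' → w' ≤ x := fun x hx =>
            hw' ▸ Finset.min'_le _ x (Finset.mem_filter.mpr ⟨(hA'.1 (x, v) hx).1, (hA'.1 (x, v) hx).2.2, hx⟩)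
          rw [SP_arrow V hne h1 A v w hv hT hw, SP_arrow V hne h1 A' v w' hv hT' hw'] at heq
          -- Schröder facts for the four pieces
          have hsub1 : (V.filter (fun x => v < x ∧ x ≤ w)).Nonempty :=
            ⟨w, Finset.mem_filter.mpr ⟨hwV, hvw, le_refl w⟩⟩
          have hsub1' : (V.filter (fun x => v < x ∧ x ≤ w')).Nonempty :=
            ⟨w', Finset.mem_filter.mpr ⟨hwV', hvw', le_refl w'⟩⟩
          have hsub2 : (V.filter (fun x => ¬(v < x ∧ x ≤ w))).Nonempty :=
            ⟨v, Finset.mem_filter.mpr ⟨hvmem, by omega⟩⟩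
          have hsub2' : (V.filter (fun x => ¬(v < x ∧ x ≤ w'))).Nonempty :=
            ⟨v, Finset.mem_filter.mpr ⟨hvmem, by omega⟩⟩
          have hsum : (V.filter (fun x => v < x ∧ x ≤ w)).card +
              (V.filter (fun x => ¬(v < x ∧ x ≤ w))).card = V.card :=
            Finset.card_filter_add_card_filter_not _
          have hsum' : (V.filter (fun x => v < x ∧ x ≤ w')).card +
              (V.filter (fun x => ¬(v < x ∧ x ≤ w'))).card = V.card :=
            Finset.card_filter_add_card_filter_not _
          have hc2 : 1 ≤ (V.filter (fun x => ¬(v < x ∧ x ≤ w))).card := Finset.card_pos.mpr hsub2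
          have hc2' : 1 ≤ (V.filter (fun x => ¬(v < x ∧ x ≤ w'))).card := Finset.card_pos.mpr hsub2'
          have hc1 : 1 ≤ (V.filter (fun x => v < x ∧ x ≤ w)).card := Finset.card_pos.mpr hsub1
          have hc1' : 1 ≤ (V.filter (fun x => v < x ∧ x ≤ w')).card := Finset.card_pos.mpr hsub1'
          obtain ⟨hs1, hs2, -, -⟩ := SP_spec N _ (restr A (V.filter (fun x => v < x ∧ x ≤ w)))
            (by omega) hsub1 (valid_restr hA)
          obtain ⟨hs1', hs2', -, -⟩ := SP_spec N _ (restr A' (V.filter (fun x => v < x ∧ x ≤ w')))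
            (by omega) hsub1' (valid_restr hA')
          rw [List.cons.injEq] at heq
          obtain ⟨sEq, tEq⟩ := split_unique hs1 hs1' heq.2
          -- deduce w = w'
          have hcardEq : (V.filter (fun x => v < x ∧ x ≤ w)).card =
              (V.filter (fun x => v < x ∧ x ≤ w')).card := by
            rw [sEq] at hs2
            omega
          have hfil := filterV1_eq V hne w
          have hfil' := filterV1_eq V hne w'
          simp only [hv] at hfil hfil'
          have hwe : w ∈ V.erase v := Finset.mem_erase.mpr ⟨by omega, hwV⟩
          have hwe' : w' ∈ V.erase v := Finset.mem_erase.mpr ⟨by omega, hwV'⟩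
          have hww : w = w' := by
            apply filter_le_inj hwe hwe'
            rw [← hfil, ← hfil']
            exact hcardEq
          subst hww
          -- now apply IH to the two halves
          have e1 : restr A (V.filter (fun x => v < x ∧ x ≤ w)) =
              restr A' (V.filter (fun x => v < x ∧ x ≤ w)) :=
            ih _ _ _ (by omega) hsub1 (valid_restr hA) (valid_restr hA') sEq
          have e2 : restr A (V.filter (fun x => ¬(v < x ∧ x ≤ w))) =
              restr A' (V.filter (fun x => ¬(v < x ∧ x ≤ w))) :=
            ih _ _ _ (by omega) hsub2 (valid_restr hA) (valid_restr hA') tEq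
          obtain ⟨hdecomp, -, -⟩ := structure_U hA hvmin hwA hvw hwmin
          obtain ⟨hdecomp', -, -⟩ := structure_U hA' hvmin hwA' hvw' hwmin'
          rw [hdecomp, hdecomp', e1, e2]
        · -- A has arrow into v, A' does not: heads differ
          exfalso
          rw [SP_arrow V hne h1 A v _ hv hT rfl,
            SP_isolated V hne h1 A' v hv hT'] at heq
          simp at heq
      · by_cases hT' : (V.filter (fun x => v < x ∧ (x, v) ∈ A')).Nonempty
        · exfalso
          rw [SP_isolated V hne h1 A v hv hT,
            SP_arrow V hne h1 A' v _ hv hT' rfl] at heq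
          simp at heq
        · -- both H
          rw [SP_isolated V hne h1 A v hv hT, SP_isolated V hne h1 A' v hv hT'] at heq
          rw [List.cons.injEq] at heq
          have hTall : ∀ x, v < x → (x, v) ∉ A := fun x hx hc =>
            hT ⟨x, Finset.mem_filter.mpr ⟨(hA.1 (x, v) hc).1, hx, hc⟩⟩
          have hTall' : ∀ x, v < x → (x, v) ∉ A' := fun x hx hc =>
            hT' ⟨x, Finset.mem_filter.mpr ⟨(hA'.1 (x, v) hc).1, hx, hc⟩⟩
          have hr := structure_H hA hvmin hTall
          have hr' := structure_H hA' hvmin hTall'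
          have hene : (V.erase v).Nonempty := by
            rw [← Finset.card_pos, Finset.card_erase_of_mem hvmem]; omega
          have hcard : (V.erase v).card ≤ N := by
            rw [Finset.card_erase_of_mem hvmem]; omega
          have := ih (V.erase v) (restr A (V.erase v)) (restr A' (V.erase v)) hcard hene
            (valid_restr hA) (valid_restr hA') heq.2
          rw [hr, hr'] at this
          exact this

end
section

lemma wordLength_zero {w : List DLetter} (h : wordLength w = 0) : w = [] := by
  cases w with
  | nil => rfl
  | cons a l =>
    exfalso
    cases a <;> simp [wordLength, List.count_cons] at h <;> omega

lemma SP_surj : ∀ (N : ℕ) (V : Finset ℕ), V.card ≤ N → V.Nonempty →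
    ∀ wd, IsSchroederWord wd → wordLength wd = 2 * (V.card - 1) →
    ∃ A, IsValidBackward V A ∧ SP V A = wd := by
  intro N
  induction N with
  | zero =>
    intro V hN hne
    exact absurd (Finset.card_pos.mpr hne) (by omega)
  | succ N ih =>
    intro V hN hne wd hsch hlen
    by_cases h1 : V.card = 1
    · refine ⟨∅, valid_empty V, ?_⟩
      rw [SP_card_one V h1]
      exact (wordLength_zero (by rw [hlen, h1])).symm
    · obtain ⟨v, hv⟩ : ∃ v, V.min' hne = v := ⟨_, rfl⟩
      have hvmem : v ∈ V := hv ▸ V.min'_mem hne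
      have hvmin : ∀ x ∈ V, v ≤ x := fun x hx => hv ▸ V.min'_le x hx
      have hcard2 : 2 ≤ V.card := by
        have := Finset.card_pos.mpr hne; omega
      have hecard : (V.erase v).card = V.card - 1 := Finset.card_erase_of_mem hvmem
      cases wd with
      | nil =>
        exfalso
        simp [wordLength] at hlen
        omega
      | cons a r =>
        cases a with
        | D =>
          exfalso
          have := hsch.2 [DLetter.D] ⟨r, rfl⟩
          simp at this
        | H =>
          have hr : IsSchroederWord r := isSchroeder_cons_H.mp hsch
          rw [wordLength_cons_H] at hlen
          have hene : (V.erase v).Nonempty := by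
            rw [← Finset.card_pos, hecard]; omega
          obtain ⟨A, hAval, hSP⟩ := ih (V.erase v) (by omega) hene r hr
            (by rw [hecard]; omega)
          have hAV : IsValidBackward V A := valid_mono (Finset.erase_subset v V) hAval
          have hT : ¬ (V.filter (fun x => v < x ∧ (x, v) ∈ A)).Nonempty := by
            rintro ⟨x, hx⟩
            rw [Finset.mem_filter] at hx
            have := (hAval.1 (x, v) hx.2.2).2.1
            simp at this
          have hrestr : restr A (V.erase v) = A := by
            apply Finset.filter_true_of_mem
            intro p hp
            exact ⟨(hAval.1 p hp).1, (hAval.1 p hp).2.1⟩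
          exact ⟨A, hAV, by rw [SP_isolated V hne h1 A v hv hT, hrestr, hSP]⟩
        | U =>
          obtain ⟨s, t, rfl, hsS, htS⟩ := schroeder_U_decomp hsch
          rw [wordLength_UD] at hlen
          have hms : wordLength s = 2 * (s.count DLetter.U + s.count DLetter.H) := by
            have := hsS.1
            simp [wordLength]; omega
          have hmt : wordLength t = 2 * (t.count DLetter.U + t.count DLetter.H) := by
            have := htS.1
            simp [wordLength]; omega
          obtain ⟨m, hm⟩ : ∃ m, wordLength s = 2 * m := ⟨_, hms⟩
          obtain ⟨mt, hmtt⟩ : ∃ m, wordLength t = 2 * m := ⟨_, hmt⟩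
          have hmle : m + 1 + ((V.erase v).card - (m + 1)) = (V.erase v).card := by
            rw [hecard]; omega
          obtain ⟨w, hwe, hwcard⟩ := exists_filter_le_card ((V.erase v).card - (m + 1))
            (V.erase v) m hmle.symm
          have hfil := filterV1_eq V hne w
          simp only [hv] at hfil
          have hwV : w ∈ V := (Finset.mem_erase.mp hwe).2
          have hvw : v < w :=
            lt_of_le_of_ne (hvmin w hwV) (Ne.symm (Finset.mem_erase.mp hwe).1)
          have hV₁card : (V.filter (fun x => v < x ∧ x ≤ w)).card = m + 1 := by
            rw [hfil, hwcard]
          have hsum : (V.filter (fun x => v < x ∧ x ≤ w)).card +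
              (V.filter (fun x => ¬(v < x ∧ x ≤ w))).card = V.card :=
            Finset.card_filter_add_card_filter_not _
          have hV₂v : v ∈ V.filter (fun x => ¬(v < x ∧ x ≤ w)) :=
            Finset.mem_filter.mpr ⟨hvmem, by omega⟩
          have hV₂ne : (V.filter (fun x => ¬(v < x ∧ x ≤ w))).Nonempty := ⟨v, hV₂v⟩
          have hc2 : 1 ≤ (V.filter (fun x => ¬(v < x ∧ x ≤ w))).card :=
            Finset.card_pos.mpr hV₂ne
          have hV₁ne : (V.filter (fun x => v < x ∧ x ≤ w)).Nonempty :=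
            Finset.card_pos.mp (by omega)
          obtain ⟨A₁, hA₁, hSP₁⟩ := ih (V.filter (fun x => v < x ∧ x ≤ w)) (by omega) hV₁ne s hsS
            (by rw [hV₁card]; omega)
          obtain ⟨A₂, hA₂, hSP₂⟩ := ih (V.filter (fun x => ¬(v < x ∧ x ≤ w))) (by omega) hV₂ne
            t htS (by omega)
          set A : Finset (ℕ × ℕ) := insert (w, v) (A₁ ∪ A₂) with hA
          have prof1 : ∀ p ∈ A₁, p.1 ∈ V ∧ p.2 ∈ V ∧ v < p.2 ∧ p.2 < p.1 ∧ p.1 ≤ w := by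
            intro p hp
            obtain ⟨q1, q2, q3⟩ := hA₁.1 p hp
            rw [Finset.mem_filter] at q1 q2
            exact ⟨q1.1, q2.1, q2.2.1, q3, q1.2.2⟩
          have prof2 : ∀ p ∈ A₂, p.1 ∈ V ∧ p.2 ∈ V ∧ p.2 < p.1 ∧ w < p.1 ∧
              (p.2 = v ∨ w < p.2) := by
            intro p hp
            obtain ⟨q1, q2, q3⟩ := hA₂.1 p hp
            rw [Finset.mem_filter] at q1 q2
            have hv1 := hvmin _ q1.1
            have hv2 := hvmin _ q2.1
            have n1 := q1.2
            have n2 := q2.2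
            exact ⟨q1.1, q2.1, q3, by omega, by omega⟩
          have profA : ∀ p ∈ A, (p.1 = w ∧ p.2 = v) ∨
              (p ∈ A₁ ∧ v < p.2 ∧ p.2 < p.1 ∧ p.1 ≤ w) ∨
              (p ∈ A₂ ∧ p.2 < p.1 ∧ w < p.1 ∧ (p.2 = v ∨ w < p.2)) := by
            intro p hp
            rw [hA, Finset.mem_insert, Finset.mem_union] at hp
            rcases hp with rfl | hp | hp
            · exact Or.inl ⟨rfl, rfl⟩
            · exact Or.inr (Or.inl ⟨hp, (prof1 p hp).2.2⟩)
            · exact Or.inr (Or.inr ⟨hp, (prof2 p hp).2.2⟩)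
          have hAval : IsValidBackward V A := by
            refine ⟨?_, ?_, ?_⟩
            · intro p hp
              rw [hA, Finset.mem_insert, Finset.mem_union] at hp
              rcases hp with rfl | hp | hp
              · exact ⟨hwV, hvmem, hvw⟩
              · exact ⟨(prof1 p hp).1, (prof1 p hp).2.1, (prof1 p hp).2.2.2.1⟩
              · exact ⟨(prof2 p hp).1, (prof2 p hp).2.1, (prof2 p hp).2.2.1⟩
            · intro p hp q hq
              rcases profA p hp with ⟨e1, e2⟩ | ⟨hp1, f1, f2, f3⟩ | ⟨hp2, f1, f2, f3⟩ <;>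
                rcases profA q hq with ⟨g1, g2⟩ | ⟨hq1, g1, g2, g3⟩ | ⟨hq2, g1, g2, g3⟩
              · omega
              · omega
              · omega
              · omega
              · exact hA₁.2.1 p hp1 q hq1
              · omega
              · omega
              · omega
              · exact hA₂.2.1 p hp2 q hq2
            · intro p hp q hq
              rcases profA p hp with ⟨e1, e2⟩ | ⟨hp1, f1, f2, f3⟩ | ⟨hp2, f1, f2, f3⟩ <;>
                rcases profA q hq with ⟨g1, g2⟩ | ⟨hq1, g1, g2, g3⟩ | ⟨hq2, g1, g2, g3⟩
              · omega
              · omega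
              · omega
              · omega
              · exact hA₁.2.2 p hp1 q hq1
              · omega
              · omega
              · omega
              · exact hA₂.2.2 p hp2 q hq2
          have hwAmem : (w, v) ∈ A := by rw [hA]; exact Finset.mem_insert_self _ _
          have hT : (V.filter (fun x => v < x ∧ (x, v) ∈ A)).Nonempty :=
            ⟨w, Finset.mem_filter.mpr ⟨hwV, hvw, hwAmem⟩⟩
          have hmin : (V.filter (fun x => v < x ∧ (x, v) ∈ A)).min' hT = w := by
            apply le_antisymm
            · exact Finset.min'_le _ w (Finset.mem_filter.mpr ⟨hwV, hvw, hwAmem⟩)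
            · apply Finset.le_min'
              intro y hy
              rw [Finset.mem_filter] at hy
              rcases profA (y, v) hy.2.2 with ⟨e1, _⟩ | ⟨_, f1, _, _⟩ | ⟨_, _, f2, _⟩
              · have : y = w := e1; omega
              · have : v < v := f1; omega
              · have : w < y := f2; omega
          have hrestr1 : restr A (V.filter (fun x => v < x ∧ x ≤ w)) = A₁ := by
            ext p
            simp only [restr, Finset.mem_filter]
            constructor
            · rintro ⟨hp, hp1, hp2⟩
              rcases profA p hp with ⟨e1, e2⟩ | ⟨hq, _⟩ | ⟨_, _, f2, _⟩
              · omega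
              · exact hq
              · omega
            · intro hp
              obtain ⟨q1, q2, _⟩ := hA₁.1 p hp
              rw [Finset.mem_filter] at q1 q2
              exact ⟨by rw [hA]; exact Finset.mem_insert_of_mem (Finset.mem_union_left _ hp),
                ⟨q1.1, q1.2⟩, ⟨q2.1, q2.2⟩⟩
          have hrestr2 : restr A (V.filter (fun x => ¬(v < x ∧ x ≤ w))) = A₂ := by
            ext p
            simp only [restr, Finset.mem_filter]
            constructor
            · rintro ⟨hp, hp1, hp2⟩
              rcases profA p hp with ⟨e1, e2⟩ | ⟨hq, f1, f2, f3⟩ | ⟨hq, _⟩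
              · exfalso; exact hp1.2 (by omega)
              · exfalso; exact hp1.2 (by omega)
              · exact hq
            · intro hp
              obtain ⟨q1, q2, _⟩ := hA₂.1 p hp
              rw [Finset.mem_filter] at q1 q2
              exact ⟨by rw [hA]; exact Finset.mem_insert_of_mem (Finset.mem_union_right _ hp),
                ⟨q1.1, q1.2⟩, ⟨q2.1, q2.2⟩⟩
          exact ⟨A, hAval,
            by rw [SP_arrow V hne h1 A v w hv hT hmin, hrestr1, hrestr2, hSP₁, hSP₂]⟩

end

/-- `SP` is a bijection between the set of valid digraphs consisting only of
backward arrows on an `(n+1)`-element node set and the set of Schröder words of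
length `2n`; moreover a digraph with exactly `k` backward arrows maps to a word
with exactly `k` letters `U` and `k` letters `D`. -/
theorem SP_bijection (n : ℕ) (V : Finset ℕ) (hV : V.card = n + 1) :
    Set.BijOn (SP V) {A | IsValidBackward V A}
      {w | IsSchroederWord w ∧ wordLength w = 2 * n} ∧
    ∀ A : Finset (ℕ × ℕ), IsValidBackward V A →
      (SP V A).count DLetter.U = A.card ∧ (SP V A).count DLetter.D = A.card := by
  have hne : V.Nonempty := Finset.card_pos.mp (by omega)
  constructor
  · refine ⟨?_, ?_, ?_⟩
    · intro A hA
      obtain ⟨h1, h2, -, -⟩ := SP_spec V.card V A le_rfl hne hA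
      exact ⟨h1, by rw [h2, hV]; omega⟩
    · intro A hA A' hA' heq
      exact SP_inj V.card V A A' le_rfl hne hA hA' heq
    · intro wd hwd
      obtain ⟨A, hA, hSP⟩ := SP_surj V.card V le_rfl hne wd hwd.1
        (by rw [hwd.2, hV]; omega)
      exact ⟨A, hA, hSP⟩
  · intro A hA
    obtain ⟨-, -, h3, h4⟩ := SP_spec V.card V A le_rfl hne hA
    exact ⟨h3, h4⟩
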